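/- Every rigid abelian symmetric monoidal category is reduced: if f is a morphism with f ⊗ f = 0, then f = 0. In particular, the commutative ring End(1) is reduced. -/

import Mathlib

open CategoryTheory CategoryTheory.Limits CategoryTheory.MonoidalCategory

section Aux

variable {A : Type*} [Category A] [Abelian A]
    [MonoidalCategory A] [SymmetricCategory A] [MonoidalPreadditive A]
    [RigidCategory A]

/-- Tensoring on the right preserves monomorphisms in a rigid category. -/
lemma aux_mono_whiskerRight {X Y : A} (f : X ⟶ Y) [Mono f] (Z : A) : Mono (f ▷ Z) := by
  haveI : (tensorRight Z).PreservesMonomorphisms :=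
    Functor.preservesMonomorphisms_of_adjunction (tensorRightAdjunction (ᘁZ) Z)
  have := (tensorRight Z).map_mono f
  simpa using this

/-- Tensoring on the left preserves monomorphisms in a rigid category. -/
lemma aux_mono_whiskerLeft (Z : A) {X Y : A} (f : X ⟶ Y) [Mono f] : Mono (Z ◁ f) := by
  haveI : (tensorLeft Z).PreservesMonomorphisms :=
    Functor.preservesMonomorphisms_of_adjunction (tensorLeftAdjunction Z (Zᘁ))
  have := (tensorLeft Z).map_mono f
  simpa using this

/-- Tensoring on the right preserves epimorphisms in a rigid category. -/
lemma aux_epi_whiskerRight {X Y : A} (f : X ⟶ Y) [Epi f] (Z : A) : Epi (f ▷ Z) := by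
  haveI : (tensorRight Z).PreservesEpimorphisms :=
    Functor.preservesEpimorphisms_of_adjunction (tensorRightAdjunction Z (Zᘁ))
  have := (tensorRight Z).map_epi f
  simpa using this

/-- Tensoring on the left preserves epimorphisms in a rigid category. -/
lemma aux_epi_whiskerLeft (Z : A) {X Y : A} (f : X ⟶ Y) [Epi f] : Epi (Z ◁ f) := by
  haveI : (tensorLeft Z).PreservesEpimorphisms :=
    Functor.preservesEpimorphisms_of_adjunction (tensorLeftAdjunction (ᘁZ) Z)
  have := (tensorLeft Z).map_epi f
  simpa using this

lemma aux_mono_tensor {X Y : A} (f : X ⟶ Y) [Mono f] : Mono (f ⊗ₘ f) := by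
  rw [MonoidalCategory.tensorHom_def]
  haveI := aux_mono_whiskerRight f X
  haveI := aux_mono_whiskerLeft Y f
  exact mono_comp _ _

lemma aux_epi_tensor {X Y : A} (f : X ⟶ Y) [Epi f] : Epi (f ⊗ₘ f) := by
  rw [MonoidalCategory.tensorHom_def]
  haveI := aux_epi_whiskerRight f X
  haveI := aux_epi_whiskerLeft Y f
  exact epi_comp _ _

/-- If `I ⊗ I` is zero then `I` is zero, in a rigid braided category. -/
lemma aux_isZero_of_tensor_self (I : A) (h : IsZero (I ⊗ I)) : IsZero I := by
  -- `(I ⊗ I) ⊗ ᘁI` is zero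
  have h1 : IsZero ((I ⊗ I) ⊗ (ᘁI)) := by
    rw [IsZero.iff_id_eq_zero]
    calc 𝟙 ((I ⊗ I) ⊗ (ᘁI)) = (𝟙 (I ⊗ I)) ▷ (ᘁI) := by simp
    _ = (0 : I ⊗ I ⟶ I ⊗ I) ▷ (ᘁI) := by rw [(IsZero.iff_id_eq_zero _).1 h]
    _ = 0 := MonoidalPreadditive.zero_whiskerRight
  -- hence `I ⊗ (ᘁI ⊗ I)` is zero, via the braiding and associator
  have h2 : IsZero (I ⊗ ((ᘁI) ⊗ I)) := by
    refine h1.of_iso ?_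
    exact whiskerLeftIso I (β_ (ᘁI) I) ≪≫ (α_ I I (ᘁI)).symm
  -- the identity of `I` factors through `I ⊗ (ᘁI ⊗ I)`
  rw [IsZero.iff_id_eq_zero]
  have tri := ExactPairing.coevaluation_evaluation (ᘁI) I
  have : 𝟙 I = ((ρ_ I).inv ≫ I ◁ (η_ (ᘁI) I)) ≫
      ((α_ I (ᘁI) I).inv ≫ (ε_ (ᘁI) I) ▷ I ≫ (λ_ I).hom) := by
    simp [reassoc_of% tri]
  rw [this, h2.eq_zero_of_src ((α_ I (ᘁI) I).inv ≫ (ε_ (ᘁI) I) ▷ I ≫ (λ_ I).hom), comp_zero]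

lemma aux_main {X Y : A} (f : X ⟶ Y) (h : f ⊗ₘ f = 0) : f = 0 := by
  set I := Abelian.image f
  set e := Abelian.factorThruImage f with he
  set m := Abelian.image.ι f with hm
  have fac : e ≫ m = f := Abelian.image.fac f
  have hee : (e ⊗ₘ e) ≫ (m ⊗ₘ m) = 0 := by rw [tensorHom_comp_tensorHom, fac, h]
  haveI : Epi (e ⊗ₘ e) := aux_epi_tensor e
  haveI : Mono (m ⊗ₘ m) := aux_mono_tensor m
  have hmm : (m ⊗ₘ m) = 0 := by
    rw [← cancel_epi (e ⊗ₘ e), hee, comp_zero]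
  have hz : IsZero (I ⊗ I) := IsZero.of_mono_eq_zero _ hmm
  have hI : IsZero I := aux_isZero_of_tensor_self I hz
  have : m = 0 := hI.eq_zero_of_src m
  rw [← fac, this, comp_zero]

/-- For endomorphisms of the unit, composition agrees with tensoring. -/
lemma aux_tensor_eq_comp (f g : 𝟙_ A ⟶ 𝟙_ A) :
    f ⊗ₘ g = (ρ_ (𝟙_ A)).hom ≫ (f ≫ g) ≫ (λ_ (𝟙_ A)).inv := by
  simp [MonoidalCategory.tensorHom_def, id_whiskerLeft, MonoidalCategory.whiskerRight_id, unitors_equal]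

end Aux

/-- Every rigid abelian symmetric monoidal category is reduced: `f ⊗ f = 0` implies
`f = 0`. In particular the ring `End(1)` is reduced. -/
theorem rigid_abelian_reduced
    {A : Type*} [Category A] [Abelian A]
    [MonoidalCategory A] [SymmetricCategory A] [MonoidalPreadditive A]
    [RigidCategory A] :
    (∀ {X Y : A} (f : X ⟶ Y), f ⊗ₘ f = 0 → f = 0) ∧ IsReduced (End (𝟙_ A)) := by
  refine ⟨fun f h => aux_main f h, ?_⟩
  have sq : ∀ x : End (𝟙_ A), x * x = 0 → x = 0 := by
    intro x hx
    apply aux_main x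
    have : x ≫ x = 0 := hx
    rw [aux_tensor_eq_comp, this, zero_comp, comp_zero]
  constructor
  rintro x ⟨n, hn⟩
  induction n using Nat.strong_induction_on generalizing x with
  | _ n ih =>
    match n, hn with
    | 0, hn =>
      have : (1 : End (𝟙_ A)) = 0 := by simpa using hn
      calc x = x * 1 := (mul_one x).symm
      _ = 0 := by rw [this, mul_zero]
    | 1, hn => simpa using hn
    | (n+2), hn =>
      have key : x ^ (n + 1) = 0 := by
        apply sq
        rw [← pow_add]
        have : (n+1) + (n+1) = (n+2) + n := by omega
        rw [this, pow_add, hn, zero_mul]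
      exact ih (n+1) (by omega) x key
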